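/- Contraction inequality for AppGrad (intermediate step of Theorem 2.1): under the CCA setup with λ_max(Sₓ), λ_max(S_y) ≤ L₁, the AppGrad errors satisfy ‖Δφ̃ᵗ⁺¹‖² + ‖Δψ̃ᵗ⁺¹‖² ≤ (‖Δφ̃ᵗ‖² + ‖Δψ̃ᵗ‖²) − 2η·[1 − (1/λ₁)·((L₁/2)‖Δψ̃ᵗ‖² + (L₁/2)‖Δφ̃ᵗ‖² + λ₂²)^{1/2} − 3L₁η]·(‖Δφ̃ᵗ‖_x² + ‖Δψ̃ᵗ‖_y²). -/

import Mathlib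

open Matrix

section AuxLemmas

lemma dmv_symm {n : ℕ} {S : Matrix (Fin n) (Fin n) ℝ} (hS : Sᵀ = S) (x y : Fin n → ℝ) :
    x ⬝ᵥ (S *ᵥ y) = y ⬝ᵥ (S *ᵥ x) := by
  rw [dotProduct_mulVec, ← mulVec_transpose, hS, dotProduct_comm]

lemma mv_dot {n m : ℕ} (Φ : Matrix (Fin n) (Fin m) ℝ) (c : Fin m → ℝ) (x : Fin n → ℝ) :
    (Φ *ᵥ c) ⬝ᵥ x = c ⬝ᵥ (Φᵀ *ᵥ x) := by
  rw [dotProduct_comm, dotProduct_mulVec, ← mulVec_transpose, dotProduct_comm]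

lemma herm_t {n : ℕ} {S : Matrix (Fin n) (Fin n) ℝ} (h : S.IsHermitian) : Sᵀ = S := by
  have h' : S.IsSymm := by simpa [conjTranspose, star, Matrix.map_id] using h
  exact h'

lemma psd_nonneg {n : ℕ} {S : Matrix (Fin n) (Fin n) ℝ} (h : S.PosSemidef) (x : Fin n → ℝ) :
    0 ≤ x ⬝ᵥ (S *ᵥ x) := by simpa using h.dotProduct_mulVec_nonneg x

lemma dot_self_nonneg' {n : ℕ} (x : Fin n → ℝ) : 0 ≤ x ⬝ᵥ x :=
  Finset.sum_nonneg fun i _ => mul_self_nonneg _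

/-- projection trick : if `Φᵀ S Φ = 1` and `S` psd then `‖Φᵀ S a‖² ≤ aᵀ S a`. -/
lemma proj_aux {n m : ℕ} {S : Matrix (Fin n) (Fin n) ℝ} (hS : S.PosSemidef)
    {Φ : Matrix (Fin n) (Fin m) ℝ} (hΦ : Φᵀ * S * Φ = 1) (a : Fin n → ℝ) :
    (Φᵀ *ᵥ (S *ᵥ a)) ⬝ᵥ (Φᵀ *ᵥ (S *ᵥ a)) ≤ a ⬝ᵥ (S *ᵥ a) := by
  set c : Fin m → ℝ := Φᵀ *ᵥ (S *ᵥ a) with hc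
  have hSt : Sᵀ = S := herm_t hS.1
  have h0 := psd_nonneg hS (a - Φ *ᵥ c)
  have e1 : (Φ *ᵥ c) ⬝ᵥ (S *ᵥ a) = c ⬝ᵥ c := by
    rw [mv_dot]
  have e2 : a ⬝ᵥ (S *ᵥ (Φ *ᵥ c)) = c ⬝ᵥ c := by
    rw [dmv_symm hSt, e1]
  have e3 : (Φ *ᵥ c) ⬝ᵥ (S *ᵥ (Φ *ᵥ c)) = c ⬝ᵥ c := by
    rw [mv_dot, mulVec_mulVec, mulVec_mulVec, hΦ, one_mulVec]
  have expand : (a - Φ *ᵥ c) ⬝ᵥ (S *ᵥ (a - Φ *ᵥ c))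
      = a ⬝ᵥ (S *ᵥ a) - c ⬝ᵥ c := by
    rw [Matrix.mulVec_sub, dotProduct_sub, sub_dotProduct, sub_dotProduct, e1, e2, e3]
    ring
  linarith [expand ▸ h0]

lemma conj_one {n m : ℕ} {S : Matrix (Fin n) (Fin n) ℝ}
    {Φ : Matrix (Fin n) (Fin m) ℝ} (hΦ : Φᵀ * S * Φ = 1) (z : Fin m → ℝ) :
    (Φ *ᵥ z) ⬝ᵥ (S *ᵥ (Φ *ᵥ z)) = z ⬝ᵥ z := by
  rw [mv_dot, mulVec_mulVec, mulVec_mulVec, hΦ, one_mulVec]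

lemma spec_aux {n : ℕ} {A : Matrix (Fin n) (Fin n) ℝ} (hA : A.PosDef) {L : ℝ}
    (hmax : ∀ i, hA.isHermitian.eigenvalues i ≤ L) (v : Fin n → ℝ) :
    v ⬝ᵥ (A *ᵥ v) ≤ L * (v ⬝ᵥ v) ∧ (A *ᵥ v) ⬝ᵥ (A *ᵥ v) ≤ L * (v ⬝ᵥ (A *ᵥ v)) := by
  classical
  have hH := hA.isHermitian
  set U : Matrix (Fin n) (Fin n) ℝ := (hH.eigenvectorUnitary : Matrix (Fin n) (Fin n) ℝ) with hU
  set d : Fin n → ℝ := hH.eigenvalues with hd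
  have hUU : U * star U = 1 := Matrix.mem_unitaryGroup_iff.mp hH.eigenvectorUnitary.2
  have hUU' : star U * U = 1 := Matrix.mem_unitaryGroup_iff'.mp hH.eigenvectorUnitary.2
  have hT : Uᵀ = star U := by
    simp [star, conjTranspose, Matrix.map_id]
  have hspec : A = U * Matrix.diagonal d * star U := by
    have := hH.spectral_theorem
    simpa using this
  set w : Fin n → ℝ := star U *ᵥ v with hw
  have key : ∀ x : Fin n → ℝ, (U *ᵥ x) ⬝ᵥ (U *ᵥ x) = x ⬝ᵥ x := by
    intro x
    rw [dotProduct_mulVec, ← mulVec_transpose, hT, mulVec_mulVec, hUU', one_mulVec]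
  have key2 : ∀ x : Fin n → ℝ, v ⬝ᵥ (U *ᵥ x) = w ⬝ᵥ x := by
    intro x
    rw [dotProduct_mulVec, ← mulVec_transpose, hT, hw]
  have hvw : U *ᵥ w = v := by
    rw [hw, mulVec_mulVec, hUU, one_mulVec]
  have hAv : A *ᵥ v = U *ᵥ (Matrix.diagonal d *ᵥ w) := by
    rw [hspec, ← mulVec_mulVec, ← mulVec_mulVec]
  have e1 : v ⬝ᵥ (A *ᵥ v) = ∑ i, d i * w i ^ 2 := by
    rw [hAv, key2]
    simp [dotProduct, Matrix.mulVec_diagonal]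
    congr 1; ext i; ring
  have e2 : v ⬝ᵥ v = ∑ i, w i ^ 2 := by
    conv_lhs => rw [← hvw, key]
    simp [dotProduct]
    congr 1; ext i; ring
  have e3 : (A *ᵥ v) ⬝ᵥ (A *ᵥ v) = ∑ i, d i ^ 2 * w i ^ 2 := by
    rw [hAv, key]
    simp [dotProduct, Matrix.mulVec_diagonal]
    congr 1; ext i; ring
  have hdnn : ∀ i, 0 ≤ d i := fun i => (hA.eigenvalues_pos i).le
  constructor
  · rw [e1, e2, Finset.mul_sum]
    refine Finset.sum_le_sum fun i _ => ?_
    have h := mul_nonneg (sub_nonneg.2 (hmax i)) (sq_nonneg (w i))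
    nlinarith
  · rw [e3, e1, Finset.mul_sum]
    refine Finset.sum_le_sum fun i _ => ?_
    have h := mul_nonneg (mul_nonneg (sub_nonneg.2 (hmax i)) (hdnn i)) (sq_nonneg (w i))
    nlinarith

lemma two_cs (x1 x2 y1 y2 : ℝ) :
    x1*y1 + x2*y2 ≤ Real.sqrt (x1^2+x2^2) * Real.sqrt (y1^2+y2^2) := by
  have h2 : (x1*y1+x2*y2)^2 ≤ (x1^2+x2^2)*(y1^2+y2^2) := by nlinarith [sq_nonneg (x1*y2 - x2*y1)]
  calc x1*y1 + x2*y2 ≤ Real.sqrt ((x1^2+x2^2)*(y1^2+y2^2)) := Real.le_sqrt_of_sq_le h2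
    _ = _ := Real.sqrt_mul (by positivity) _

lemma sqrt_concave (u v c : ℝ) (hu : 0 ≤ u) (hv : 0 ≤ v) (hc : 0 ≤ c) :
    Real.sqrt (c+u) + Real.sqrt (c+v) ≤ 2 * Real.sqrt (c + (u+v)/2) := by
  have h1 := Real.sq_sqrt (by linarith : (0:ℝ) ≤ c + u)
  have h2 := Real.sq_sqrt (by linarith : (0:ℝ) ≤ c + v)
  have h3 : (Real.sqrt (c+u) + Real.sqrt (c+v))^2 ≤ 4 * (c + (u+v)/2) := by
    nlinarith [sq_nonneg (Real.sqrt (c+u) - Real.sqrt (c+v))]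
  have h4 : Real.sqrt (c+u) + Real.sqrt (c+v) ≤ Real.sqrt (4 * (c + (u+v)/2)) :=
    Real.le_sqrt_of_sq_le h3
  rwa [show (4:ℝ) * (c + (u+v)/2) = 2^2 * (c + (u+v)/2) by ring, Real.sqrt_mul (by positivity),
    Real.sqrt_sq (by norm_num : (0:ℝ) ≤ 2)] at h4

lemma dot_sub_smul {n : ℕ} (x y : Fin n → ℝ) (η : ℝ) :
    (x - η • y) ⬝ᵥ (x - η • y) = x ⬝ᵥ x - 2*η*(x ⬝ᵥ y) + η^2*(y ⬝ᵥ y) := by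
  simp only [dotProduct_sub, sub_dotProduct, dotProduct_smul, smul_dotProduct, smul_eq_mul,
    dotProduct_comm y x]
  ring

lemma dot_sub_le {n : ℕ} (x y : Fin n → ℝ) :
    (x - y) ⬝ᵥ (x - y) ≤ 2*(x ⬝ᵥ x) + 2*(y ⬝ᵥ y) := by
  have h0 : 0 ≤ (x + y) ⬝ᵥ (x + y) := dot_self_nonneg' _
  simp only [dotProduct_sub, sub_dotProduct, dotProduct_add, add_dotProduct,
    dotProduct_comm y x] at *
  linarith

lemma quad_expand {n : ℕ} {S : Matrix (Fin n) (Fin n) ℝ} (hS : Sᵀ = S) (u v : Fin n → ℝ)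
    (s t : ℝ) :
    (s • u - t • v) ⬝ᵥ (S *ᵥ (s • u - t • v))
      = s^2*(u ⬝ᵥ (S *ᵥ u)) - 2*s*t*(u ⬝ᵥ (S *ᵥ v)) + t^2*(v ⬝ᵥ (S *ᵥ v)) := by
  have h := dmv_symm hS v u
  simp only [Matrix.mulVec_sub, Matrix.mulVec_smul, dotProduct_sub, sub_dotProduct,
    dotProduct_smul, smul_dotProduct, smul_eq_mul, h]
  ring

end AuxLemmas

set_option maxHeartbeats 2000000 in
/-- contraction inequality, intermediate step of Theorem 2.1. -/
theorem stmt14 {p1 p2 p : ℕ}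
    (Sx : Matrix (Fin p1) (Fin p1) ℝ) (Sy : Matrix (Fin p2) (Fin p2) ℝ)
    (Sxy : Matrix (Fin p1) (Fin p2) ℝ)
    (hSxpd : Sx.PosDef) (hSypd : Sy.PosDef)
    (L1 : ℝ) (hL1 : 1 ≤ L1)
    (hmaxx : ∀ i, hSxpd.isHermitian.eigenvalues i ≤ L1)
    (hmaxy : ∀ i, hSypd.isHermitian.eigenvalues i ≤ L1)
    -- canonical decomposition with correlations `l 0 = λ₁ ≥ λ₂ = l 1 ≥ …`
    (Φ : Matrix (Fin p1) (Fin (p + 2)) ℝ) (Ψ : Matrix (Fin p2) (Fin (p + 2)) ℝ)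
    (l : Fin (p + 2) → ℝ) (hlnn : ∀ i, 0 ≤ l i)
    (hlmono : ∀ i j : Fin (p + 2), i ≤ j → l j ≤ l i)
    (hΦ : Φᵀ * Sx * Φ = 1) (hΨ : Ψᵀ * Sy * Ψ = 1)
    (hdecomp : Sxy = Sx * Φ * Matrix.diagonal l * Ψᵀ * Sy)
    (lam1 lam2 : ℝ) (hlam1 : lam1 = l 0) (hlam2 : lam2 = l 1)
    (hlam1pos : 0 < lam1)
    (φ1 : Fin p1 → ℝ) (ψ1 : Fin p2 → ℝ)
    (hφ1 : φ1 = fun j => Φ j 0) (hψ1 : ψ1 = fun j => Ψ j 0)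
    -- unnormalized counterparts of the leading canonical pair
    (φ1' : Fin p1 → ℝ) (ψ1' : Fin p2 → ℝ)
    (hφ1' : φ1' = lam1 • φ1) (hψ1' : ψ1' = lam1 • ψ1)
    -- current iterates : unnormalized `φt', ψt'` and normalized `φt, ψt`
    (φt' : Fin p1 → ℝ) (ψt' : Fin p2 → ℝ) (φt : Fin p1 → ℝ) (ψt : Fin p2 → ℝ)
    (hφt : φt = (Real.sqrt (φt' ⬝ᵥ (Sx *ᵥ φt')))⁻¹ • φt')
    (hψt : ψt = (Real.sqrt (ψt' ⬝ᵥ (Sy *ᵥ ψt')))⁻¹ • ψt')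
    (hφtunit : φt ⬝ᵥ (Sx *ᵥ φt) = 1) (hψtunit : ψt ⬝ᵥ (Sy *ᵥ ψt) = 1)
    -- WLOG nonnegative cosines with the leading canonical pair
    (hcosx : 0 ≤ φt' ⬝ᵥ (Sx *ᵥ φ1)) (hcosy : 0 ≤ ψt' ⬝ᵥ (Sy *ᵥ ψ1))
    -- one AppGrad step with common step size `η`
    (η : ℝ) (hη : 0 < η)
    (φn' : Fin p1 → ℝ) (ψn' : Fin p2 → ℝ)
    (hupx : φn' = φt' - η • (Sx *ᵥ φt' - Sxy *ᵥ ψt))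
    (hupy : ψn' = ψt' - η • (Sy *ᵥ ψt' - Sxyᵀ *ᵥ φt)) :
    (φn' - φ1') ⬝ᵥ (φn' - φ1') + (ψn' - ψ1') ⬝ᵥ (ψn' - ψ1') ≤
      ((φt' - φ1') ⬝ᵥ (φt' - φ1') + (ψt' - ψ1') ⬝ᵥ (ψt' - ψ1'))
      - 2 * η *
        (1 - (1 / lam1) * Real.sqrt ((L1 / 2) * ((ψt' - ψ1') ⬝ᵥ (ψt' - ψ1'))
              + (L1 / 2) * ((φt' - φ1') ⬝ᵥ (φt' - φ1')) + lam2 ^ 2)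
           - 3 * L1 * η) *
        ((φt' - φ1') ⬝ᵥ (Sx *ᵥ (φt' - φ1'))
          + (ψt' - ψ1') ⬝ᵥ (Sy *ᵥ (ψt' - ψ1'))) := by
  classical
  have hSxt : Sxᵀ = Sx := herm_t hSxpd.isHermitian
  have hSyt : Syᵀ = Sy := herm_t hSypd.isHermitian
  set D : Matrix (Fin (p+2)) (Fin (p+2)) ℝ := Matrix.diagonal l with hD
  -- notation
  set a : Fin p1 → ℝ := φt' - φ1' with ha
  set b : Fin p2 → ℝ := ψt' - ψ1' with hb
  set gx : Fin p1 → ℝ := Sx *ᵥ φt' - Sxy *ᵥ ψt with hgx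
  set gy : Fin p2 → ℝ := Sy *ᵥ ψt' - Sxyᵀ *ᵥ φt with hgy
  set A2 : ℝ := a ⬝ᵥ (Sx *ᵥ a) with hA2def
  set B2 : ℝ := b ⬝ᵥ (Sy *ᵥ b) with hB2def
  set Ea : ℝ := a ⬝ᵥ a with hEa
  set Eb : ℝ := b ⬝ᵥ b with hEb
  -- normalization facts
  have hNx0 : 0 ≤ φt' ⬝ᵥ (Sx *ᵥ φt') := psd_nonneg hSxpd.posSemidef _
  have hNy0 : 0 ≤ ψt' ⬝ᵥ (Sy *ᵥ ψt') := psd_nonneg hSypd.posSemidef _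
  set rx : ℝ := Real.sqrt (φt' ⬝ᵥ (Sx *ᵥ φt')) with hrx
  set ry : ℝ := Real.sqrt (ψt' ⬝ᵥ (Sy *ᵥ ψt')) with hry
  have hrx2 : rx^2 = φt' ⬝ᵥ (Sx *ᵥ φt') := Real.sq_sqrt hNx0
  have hry2 : ry^2 = ψt' ⬝ᵥ (Sy *ᵥ ψt') := Real.sq_sqrt hNy0
  have hunitx : (rx⁻¹)^2 * (φt' ⬝ᵥ (Sx *ᵥ φt')) = 1 := by
    rw [← hφtunit, hφt]
    simp only [smul_dotProduct, Matrix.mulVec_smul, dotProduct_smul, smul_eq_mul, ← hrx]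
    ring
  have hunity : (ry⁻¹)^2 * (ψt' ⬝ᵥ (Sy *ᵥ ψt')) = 1 := by
    rw [← hψtunit, hψt]
    simp only [smul_dotProduct, Matrix.mulVec_smul, dotProduct_smul, smul_eq_mul, ← hry]
    ring
  have hrxnn : 0 ≤ rx := Real.sqrt_nonneg _
  have hrynn : 0 ≤ ry := Real.sqrt_nonneg _
  have hrxpos : 0 < rx := by
    rcases eq_or_lt_of_le hrxnn with h | h
    · exfalso; rw [← h] at hunitx; simp at hunitx
    · exact h
  have hrypos : 0 < ry := by
    rcases eq_or_lt_of_le hrynn with h | h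
    · exfalso; rw [← h] at hunity; simp at hunity
    · exact h
  have hφteq : φt' = rx • φt := by
    rw [hφt, smul_smul, mul_inv_cancel₀ (ne_of_gt hrxpos), one_smul]
  have hψteq : ψt' = ry • ψt := by
    rw [hψt, smul_smul, mul_inv_cancel₀ (ne_of_gt hrypos), one_smul]
  -- units
  have hφ1e : φ1 = Φ *ᵥ Pi.single 0 1 := by
    rw [hφ1]; funext j; simp [Matrix.mulVec_single]
  have hψ1e : ψ1 = Ψ *ᵥ Pi.single 0 1 := by
    rw [hψ1]; funext j; simp [Matrix.mulVec_single]
  have hφ1unit : φ1 ⬝ᵥ (Sx *ᵥ φ1) = 1 := by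
    rw [hφ1e, conj_one hΦ]
    simp [dotProduct, Pi.single_apply]
  have hψ1unit : ψ1 ⬝ᵥ (Sy *ᵥ ψ1) = 1 := by
    rw [hψ1e, conj_one hΨ]
    simp [dotProduct, Pi.single_apply]
  -- cosines
  set cx : ℝ := φt ⬝ᵥ (Sx *ᵥ φ1) with hcx
  set cy : ℝ := ψt ⬝ᵥ (Sy *ᵥ ψ1) with hcy
  have hcx0 : 0 ≤ cx := by
    rw [hφteq, smul_dotProduct, smul_eq_mul, ← hcx] at hcosx
    by_contra h
    push_neg at h
    exact absurd hcosx (not_le.2 (mul_neg_of_pos_of_neg hrxpos h))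
  have hcy0 : 0 ≤ cy := by
    rw [hψteq, smul_dotProduct, smul_eq_mul, ← hcy] at hcosy
    by_contra h
    push_neg at h
    exact absurd hcosy (not_le.2 (mul_neg_of_pos_of_neg hrypos h))
  have hcx1 : cx ≤ 1 := by
    have h0 := psd_nonneg hSxpd.posSemidef ((1:ℝ) • φ1 - cx • φt)
    rw [quad_expand hSxt] at h0
    rw [hφ1unit, dmv_symm hSxt φ1 φt, ← hcx, hφtunit] at h0
    nlinarith only [h0, hcx0]
  have hcy1 : cy ≤ 1 := by
    have h0 := psd_nonneg hSypd.posSemidef ((1:ℝ) • ψ1 - cy • ψt)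
    rw [quad_expand hSyt] at h0
    rw [hψ1unit, dmv_symm hSyt ψ1 ψt, ← hcy, hψtunit] at h0
    nlinarith only [h0, hcy0]
  -- quadratic expansions
  have haeq : a = rx • φt - lam1 • φ1 := by rw [ha, hφteq, hφ1']
  have hbeq : b = ry • ψt - lam1 • ψ1 := by rw [hb, hψteq, hψ1']
  have hA2 : A2 = rx^2 - 2*lam1*rx*cx + lam1^2 := by
    rw [hA2def, haeq, quad_expand hSxt, hφtunit, hφ1unit, ← hcx]; ring
  have hB2 : B2 = ry^2 - 2*lam1*ry*cy + lam1^2 := by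
    rw [hB2def, hbeq, quad_expand hSyt, hψtunit, hψ1unit, ← hcy]; ring
  have hA2nn : 0 ≤ A2 := psd_nonneg hSxpd.posSemidef a
  have hB2nn : 0 ≤ B2 := psd_nonneg hSypd.posSemidef b
  have hA2L : lam1^2*(1-cx^2) ≤ A2 := by rw [hA2]; linarith only [sq_nonneg (rx - lam1*cx)]
  have hB2L : lam1^2*(1-cy^2) ≤ B2 := by rw [hB2]; linarith only [sq_nonneg (ry - lam1*cy)]
  have hA2C : (lam1 - rx*cx)^2 ≤ A2 := by
    rw [hA2]
    have hc2 : 0 ≤ 1 - cx^2 := by nlinarith only [hcx0, hcx1]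
    linarith only [mul_nonneg (sq_nonneg rx) hc2]
  have hB2C : (lam1 - ry*cy)^2 ≤ B2 := by
    rw [hB2]
    have hc2 : 0 ≤ 1 - cy^2 := by nlinarith only [hcy0, hcy1]
    linarith only [mul_nonneg (sq_nonneg ry) hc2]
  have hA2E : A2 ≤ L1 * Ea := (spec_aux hSxpd hmaxx a).1
  have hB2E : B2 ≤ L1 * Eb := (spec_aux hSypd hmaxy b).1
  -- difference of normalized vectors
  have hdiffx : (φt - φ1) ⬝ᵥ (Sx *ᵥ (φt - φ1)) = 2 - 2*cx := by
    have : φt - φ1 = (1:ℝ) • φt - (1:ℝ) • φ1 := by simp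
    rw [this, quad_expand hSxt, hφtunit, hφ1unit, ← hcx]; ring
  have hdiffy : (ψt - ψ1) ⬝ᵥ (Sy *ᵥ (ψt - ψ1)) = 2 - 2*cy := by
    have : ψt - ψ1 = (1:ℝ) • ψt - (1:ℝ) • ψ1 := by simp
    rw [this, quad_expand hSyt, hψtunit, hψ1unit, ← hcy]; ring
  -- mulVec unfolding of Sxy
  have hSxyv : ∀ v : Fin p2 → ℝ,
      Sxy *ᵥ v = Sx *ᵥ (Φ *ᵥ (D *ᵥ (Ψᵀ *ᵥ (Sy *ᵥ v)))) := by
    intro v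
    rw [hdecomp, ← mulVec_mulVec, ← mulVec_mulVec, ← mulVec_mulVec, ← mulVec_mulVec]
  have hdecompT : Sxyᵀ = Sy * Ψ * D * Φᵀ * Sx := by
    rw [hdecomp]
    rw [hD]
    simp only [Matrix.transpose_mul, Matrix.transpose_transpose, Matrix.diagonal_transpose,
      hSxt, hSyt]
    simp only [Matrix.mul_assoc]
  have hSxyTv : ∀ v : Fin p1 → ℝ,
      Sxyᵀ *ᵥ v = Sy *ᵥ (Ψ *ᵥ (D *ᵥ (Φᵀ *ᵥ (Sx *ᵥ v)))) := by
    intro v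
    rw [hdecompT, ← mulVec_mulVec, ← mulVec_mulVec, ← mulVec_mulVec, ← mulVec_mulVec]
  -- fixed point identities
  have hone : ∀ (q : ℕ) (S : Matrix (Fin q) (Fin q) ℝ) (M : Matrix (Fin q) (Fin (p+2)) ℝ),
      Mᵀ * S * M = 1 → Mᵀ *ᵥ (S *ᵥ (M *ᵥ Pi.single 0 1)) = Pi.single 0 1 := by
    intro q S M hM
    simp only [mulVec_mulVec, ← Matrix.mul_assoc]
    rw [hM, one_mulVec]
  have hfixx : Sxy *ᵥ ψ1 = Sx *ᵥ φ1' := by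
    have h2 : Φ *ᵥ (Pi.single 0 (l 0 * 1)) = φ1' := by
      rw [hφ1', hφ1, Matrix.mulVec_single, ← hlam1]
      funext j
      simp [mul_comm]
    rw [hSxyv, hψ1e, hone p2 Sy Ψ hΨ, hD, Matrix.diagonal_mulVec_single, h2]
  have hfixy : Sxyᵀ *ᵥ φ1 = Sy *ᵥ ψ1' := by
    have h2 : Ψ *ᵥ (Pi.single 0 (l 0 * 1)) = ψ1' := by
      rw [hψ1', hψ1, Matrix.mulVec_single, ← hlam1]
      funext j
      simp [mul_comm]
    rw [hSxyTv, hφ1e, hone p1 Sx Φ hΦ, hD, Matrix.diagonal_mulVec_single, h2]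
  -- gradient decomposition
  have hgxeq : gx = Sx *ᵥ a - Sxy *ᵥ (ψt - ψ1) := by
    rw [hgx, ha, Matrix.mulVec_sub, Matrix.mulVec_sub, hfixx]
    abel
  have hgyeq : gy = Sy *ᵥ b - Sxyᵀ *ᵥ (φt - φ1) := by
    rw [hgy, hb, Matrix.mulVec_sub, Matrix.mulVec_sub, hfixy]
    abel
  -- coordinate vectors
  set αv : Fin (p+2) → ℝ := Φᵀ *ᵥ (Sx *ᵥ a) with hαv
  set wv : Fin (p+2) → ℝ := Φᵀ *ᵥ (Sx *ᵥ (φt - φ1)) with hwv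
  set uv : Fin (p+2) → ℝ := Ψᵀ *ᵥ (Sy *ᵥ (ψt - ψ1)) with huv
  set βv : Fin (p+2) → ℝ := Ψᵀ *ᵥ (Sy *ᵥ b) with hβv
  set Tx : ℝ := αv ⬝ᵥ (D *ᵥ uv) with hTxdef
  set Ty : ℝ := βv ⬝ᵥ (D *ᵥ wv) with hTydef
  -- cross-term identities
  have hcrossx : ∀ v : Fin p2 → ℝ, a ⬝ᵥ (Sxy *ᵥ v) = αv ⬝ᵥ (D *ᵥ (Ψᵀ *ᵥ (Sy *ᵥ v))) := by
    intro v
    rw [hSxyv, dmv_symm hSxt, mv_dot, ← hαv, dotProduct_comm]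
  have hcrossy : ∀ v : Fin p1 → ℝ, b ⬝ᵥ (Sxyᵀ *ᵥ v) = βv ⬝ᵥ (D *ᵥ (Φᵀ *ᵥ (Sx *ᵥ v))) := by
    intro v
    rw [hSxyTv, dmv_symm hSyt, mv_dot, ← hβv, dotProduct_comm]
  have hag : a ⬝ᵥ gx = A2 - Tx := by
    rw [hgxeq, dotProduct_sub, ← hA2def, hcrossx, ← huv, ← hTxdef]
  have hbh : b ⬝ᵥ gy = B2 - Ty := by
    rw [hgyeq, dotProduct_sub, ← hB2def, hcrossy, ← hwv, ← hTydef]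
  -- norms of coordinate vectors
  have hαα : αv ⬝ᵥ αv ≤ A2 := proj_aux hSxpd.posSemidef hΦ a
  have hββ : βv ⬝ᵥ βv ≤ B2 := proj_aux hSypd.posSemidef hΨ b
  have huu : uv ⬝ᵥ uv ≤ 2 - 2*cy := by
    have h := proj_aux hSypd.posSemidef hΨ (ψt - ψ1)
    rwa [hdiffy] at h
  have hww : wv ⬝ᵥ wv ≤ 2 - 2*cx := by
    have h := proj_aux hSxpd.posSemidef hΦ (φt - φ1)
    rwa [hdiffx] at h
  -- zero coordinates
  have happ : ∀ (M : Matrix (Fin p1) (Fin (p+2)) ℝ) (x : Fin p1 → ℝ),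
      (Mᵀ *ᵥ x) 0 = (fun j => M j 0) ⬝ᵥ x := fun M x => rfl
  have happ' : ∀ (M : Matrix (Fin p2) (Fin (p+2)) ℝ) (x : Fin p2 → ℝ),
      (Mᵀ *ᵥ x) 0 = (fun j => M j 0) ⬝ᵥ x := fun M x => rfl
  have hα0 : αv 0 = rx*cx - lam1 := by
    rw [hαv, happ, ← hφ1, haeq, Matrix.mulVec_sub, dotProduct_sub,
      Matrix.mulVec_smul, dotProduct_smul, Matrix.mulVec_smul, dotProduct_smul,
      dmv_symm hSxt φ1 φt, ← hcx, hφ1unit]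
    simp
  have hβ0 : βv 0 = ry*cy - lam1 := by
    rw [hβv, happ', ← hψ1, hbeq, Matrix.mulVec_sub, dotProduct_sub,
      Matrix.mulVec_smul, dotProduct_smul, Matrix.mulVec_smul, dotProduct_smul,
      dmv_symm hSyt ψ1 ψt, ← hcy, hψ1unit]
    simp
  have hu0 : uv 0 = cy - 1 := by
    rw [huv, happ', ← hψ1, Matrix.mulVec_sub, dotProduct_sub,
      dmv_symm hSyt ψ1 ψt, ← hcy, hψ1unit]
  have hw0 : wv 0 = cx - 1 := by
    rw [hwv, happ, ← hφ1, Matrix.mulVec_sub, dotProduct_sub,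
      dmv_symm hSxt φ1 φt, ← hcx, hφ1unit]
  -- λ₂ nonneg
  have hlam2nn : 0 ≤ lam2 := hlam2 ▸ hlnn 1
  have hL1nn : (0:ℝ) ≤ L1 := by linarith only [hL1]
  -- diagonal operator bound
  have hzn : ∀ u' : Fin (p+2) → ℝ, (D *ᵥ u') ⬝ᵥ (D *ᵥ u') ≤ lam1^2 * (u' ⬝ᵥ u') := by
    intro u'
    simp only [hD, dotProduct, Matrix.mulVec_diagonal, Finset.mul_sum]
    refine Finset.sum_le_sum fun i _ => ?_
    have h1 : l i ≤ lam1 := hlam1 ▸ hlmono 0 i (Fin.zero_le i)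
    have h2 := hlnn i
    linarith only [mul_nonneg (mul_nonneg (sub_nonneg.2 h1)
      (by linarith only [h2, hlam1pos] : (0:ℝ) ≤ lam1 + l i)) (mul_self_nonneg (u' i))]
  -- operator norm bounds for Sxy
  have hSxyn : ∀ v : Fin p2 → ℝ, (Sxy *ᵥ v) ⬝ᵥ (Sxy *ᵥ v)
      ≤ L1 * (lam1^2 * ((Ψᵀ *ᵥ (Sy *ᵥ v)) ⬝ᵥ (Ψᵀ *ᵥ (Sy *ᵥ v)))) := by
    intro v
    rw [hSxyv]
    have s1 := (spec_aux hSxpd hmaxx (Φ *ᵥ (D *ᵥ (Ψᵀ *ᵥ (Sy *ᵥ v))))).2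
    rw [conj_one hΦ] at s1
    exact le_trans s1 (mul_le_mul_of_nonneg_left (hzn _) hL1nn)
  have hSxyTn : ∀ v : Fin p1 → ℝ, (Sxyᵀ *ᵥ v) ⬝ᵥ (Sxyᵀ *ᵥ v)
      ≤ L1 * (lam1^2 * ((Φᵀ *ᵥ (Sx *ᵥ v)) ⬝ᵥ (Φᵀ *ᵥ (Sx *ᵥ v)))) := by
    intro v
    rw [hSxyTv]
    have s1 := (spec_aux hSypd hmaxy (Ψ *ᵥ (D *ᵥ (Φᵀ *ᵥ (Sx *ᵥ v))))).2
    rw [conj_one hΨ] at s1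
    exact le_trans s1 (mul_le_mul_of_nonneg_left (hzn _) hL1nn)
  have h1cy : lam1^2*(1 - cy) ≤ lam1^2*(1 - cy^2) := by
    linarith only [mul_nonneg (mul_nonneg (sq_nonneg lam1) hcy0) (sub_nonneg.2 hcy1)]
  have h1cx : lam1^2*(1 - cx) ≤ lam1^2*(1 - cx^2) := by
    linarith only [mul_nonneg (mul_nonneg (sq_nonneg lam1) hcx0) (sub_nonneg.2 hcx1)]
  -- gradient norm bounds
  have hgx2 : gx ⬝ᵥ gx ≤ 2*L1*A2 + 4*L1*B2 := by
    rw [hgxeq]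
    have hd := dot_sub_le (Sx *ᵥ a) (Sxy *ᵥ (ψt - ψ1))
    have n1 := (spec_aux hSxpd hmaxx a).2
    rw [← hA2def] at n1
    have n2 := hSxyn (ψt - ψ1)
    rw [← huv] at n2
    have n5 : lam1^2 * (uv ⬝ᵥ uv) ≤ 2*B2 := by
      have e := mul_le_mul_of_nonneg_left huu (sq_nonneg lam1)
      linarith only [e, h1cy, hB2L]
    have n6 := mul_le_mul_of_nonneg_left n5 hL1nn
    linarith only [hd, n1, n2, n6]
  have hgy2 : gy ⬝ᵥ gy ≤ 2*L1*B2 + 4*L1*A2 := by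
    rw [hgyeq]
    have hd := dot_sub_le (Sy *ᵥ b) (Sxyᵀ *ᵥ (φt - φ1))
    have n1 := (spec_aux hSypd hmaxy b).2
    rw [← hB2def] at n1
    have n2 := hSxyTn (φt - φ1)
    rw [← hwv] at n2
    have n5 : lam1^2 * (wv ⬝ᵥ wv) ≤ 2*A2 := by
      have e := mul_le_mul_of_nonneg_left hww (sq_nonneg lam1)
      linarith only [e, h1cx, hA2L]
    have n6 := mul_le_mul_of_nonneg_left n5 hL1nn
    linarith only [hd, n1, n2, n6]
  -- splitting of diagonal cross terms
  have hsplit : ∀ x y : Fin (p+2) → ℝ, x ⬝ᵥ (D *ᵥ y)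
      = l 0 * (x 0 * y 0) + ∑ i ∈ Finset.univ.erase 0, l i * (x i * y i) := by
    intro x y
    simp only [hD, dotProduct, Matrix.mulVec_diagonal]
    have e : ∀ i, x i * (l i * y i) = l i * (x i * y i) := fun i => by ring
    simp_rw [e]
    exact (Finset.add_sum_erase Finset.univ (fun i => l i * (x i * y i))
      (Finset.mem_univ 0)).symm
  have hdotsq : ∀ x : Fin (p+2) → ℝ, x ⬝ᵥ x
      = (x 0)^2 + ∑ i ∈ Finset.univ.erase 0, (x i)^2 := by
    intro x
    simp only [dotProduct]
    have e : ∀ i, x i * x i = (x i)^2 := fun i => (sq (x i)).symm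
    simp_rw [e]
    exact (Finset.add_sum_erase Finset.univ (fun i => (x i)^2) (Finset.mem_univ 0)).symm
  have htail : ∀ x y : Fin (p+2) → ℝ,
      ∑ i ∈ Finset.univ.erase 0, l i * (x i * y i)
        ≤ lam2 * (Real.sqrt (∑ i ∈ Finset.univ.erase 0, (x i)^2)
            * Real.sqrt (∑ i ∈ Finset.univ.erase 0, (y i)^2)) := by
    intro x y
    have step1 : ∑ i ∈ Finset.univ.erase 0, l i * (x i * y i)
        ≤ ∑ i ∈ Finset.univ.erase 0, lam2 * (|x i| * |y i|) := by
      refine Finset.sum_le_sum fun i hi => ?_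
      have hi0 : i ≠ 0 := Finset.ne_of_mem_erase hi
      have h1i : (1 : Fin (p+2)) ≤ i := by
        rw [Fin.le_def, Fin.val_one]
        have hv : (i : ℕ) ≠ 0 := fun hc => hi0 (Fin.ext (by simpa using hc))
        omega
      have hl2 : l i ≤ lam2 := hlam2 ▸ hlmono 1 i h1i
      have habs : x i * y i ≤ |x i| * |y i| := by
        calc x i * y i ≤ |x i * y i| := le_abs_self _
          _ = |x i| * |y i| := abs_mul _ _
      have h3 : l i * (x i * y i) ≤ l i * (|x i| * |y i|) :=
        mul_le_mul_of_nonneg_left habs (hlnn i)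
      exact le_trans h3 (mul_le_mul_of_nonneg_right hl2 (by positivity))
    refine le_trans step1 ?_
    rw [← Finset.mul_sum]
    refine mul_le_mul_of_nonneg_left ?_ hlam2nn
    have h := Real.sum_mul_le_sqrt_mul_sqrt (Finset.univ.erase (0 : Fin (p+2)))
      (fun i => |x i|) (fun i => |y i|)
    simpa [sq_abs] using h
  -- x-side cross-term bound
  have hTxb : lam1 * Tx ≤ Real.sqrt A2 * (Real.sqrt B2 * Real.sqrt (lam2^2 + B2)) := by
    set Ex := ∑ i ∈ Finset.univ.erase (0 : Fin (p+2)), (αv i)^2 with hExdef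
    set Eu := ∑ i ∈ Finset.univ.erase (0 : Fin (p+2)), (uv i)^2 with hEudef
    have hExnn : 0 ≤ Ex := Finset.sum_nonneg fun i _ => sq_nonneg _
    have hEunn : 0 ≤ Eu := Finset.sum_nonneg fun i _ => sq_nonneg _
    have hTx1 : Tx = l 0 * (αv 0 * uv 0)
        + ∑ i ∈ Finset.univ.erase 0, l i * (αv i * uv i) := by
      rw [hTxdef]; exact hsplit αv uv
    have hExb : (αv 0)^2 + Ex ≤ A2 := by rw [← hdotsq αv]; exact hαα
    have hEub : (uv 0)^2 + Eu ≤ 2 - 2*cy := by rw [← hdotsq uv]; exact huu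
    have hEub2 : Eu ≤ 1 - cy^2 := by rw [hu0] at hEub; linarith only [hEub]
    have head : l 0 * (αv 0 * uv 0) ≤ |αv 0| * (lam1*(1 - cy)) := by
      have h1 : -(αv 0) ≤ |αv 0| := neg_le_abs _
      have h2 : 0 ≤ lam1 * (1 - cy) := mul_nonneg hlam1pos.le (by linarith only [hcy1])
      calc l 0 * (αv 0 * uv 0) = (lam1*(1-cy)) * (-(αv 0)) := by
            rw [hu0, ← hlam1]; ring
        _ ≤ (lam1*(1-cy)) * |αv 0| := mul_le_mul_of_nonneg_left h1 h2
        _ = |αv 0| * (lam1*(1-cy)) := by ring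
    have tail : ∑ i ∈ Finset.univ.erase 0, l i * (αv i * uv i)
        ≤ Real.sqrt Ex * (lam2 * Real.sqrt Eu) := by
      have := htail αv uv
      rw [← hExdef, ← hEudef] at this
      calc ∑ i ∈ Finset.univ.erase 0, l i * (αv i * uv i)
          ≤ lam2 * (Real.sqrt Ex * Real.sqrt Eu) := this
        _ = Real.sqrt Ex * (lam2 * Real.sqrt Eu) := by ring
    have cs := two_cs (|αv 0|) (Real.sqrt Ex) (lam1*(1-cy)) (lam2 * Real.sqrt Eu)
    rw [sq_abs, Real.sq_sqrt hExnn] at cs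
    have hy2 : (lam2 * Real.sqrt Eu)^2 = lam2^2 * Eu := by
      rw [mul_pow, Real.sq_sqrt hEunn]
    rw [hy2] at cs
    have hs1 : Real.sqrt ((αv 0)^2 + Ex) ≤ Real.sqrt A2 := Real.sqrt_le_sqrt hExb
    have hs2 : Real.sqrt ((lam1*(1-cy))^2 + lam2^2*Eu)
        ≤ Real.sqrt ((lam1*(1-cy))^2 + lam2^2*(1-cy^2)) :=
      Real.sqrt_le_sqrt (by linarith only [mul_le_mul_of_nonneg_left hEub2 (sq_nonneg lam2)])
    have hTx2 : Tx ≤ Real.sqrt A2 * Real.sqrt ((lam1*(1-cy))^2 + lam2^2*(1-cy^2)) := by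
      calc Tx = l 0 * (αv 0 * uv 0) + ∑ i ∈ Finset.univ.erase 0, l i * (αv i * uv i) := hTx1
        _ ≤ |αv 0| * (lam1*(1-cy)) + Real.sqrt Ex * (lam2 * Real.sqrt Eu) :=
            add_le_add head tail
        _ ≤ Real.sqrt ((αv 0)^2 + Ex) * Real.sqrt ((lam1*(1-cy))^2 + lam2^2*Eu) := cs
        _ ≤ Real.sqrt A2 * Real.sqrt ((lam1*(1-cy))^2 + lam2^2*(1-cy^2)) :=
            mul_le_mul hs1 hs2 (Real.sqrt_nonneg _) (Real.sqrt_nonneg _)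
    have hK : lam1^2 * ((lam1*(1-cy))^2 + lam2^2*(1-cy^2)) ≤ B2 * (lam2^2 + B2) := by
      have e2 : lam1^2*(1-cy) ≤ B2 := le_trans h1cy hB2L
      have e1 : 0 ≤ lam1^2*(1-cy) := mul_nonneg (sq_nonneg _) (by linarith only [hcy1])
      have e3 := mul_le_mul_of_nonneg_left hB2L (sq_nonneg lam2)
      linarith only [mul_self_le_mul_self e1 e2, e3]
    have hsqK : lam1 * Real.sqrt ((lam1*(1-cy))^2 + lam2^2*(1-cy^2))
        ≤ Real.sqrt B2 * Real.sqrt (lam2^2 + B2) := by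
      have h1 : lam1 * Real.sqrt ((lam1*(1-cy))^2 + lam2^2*(1-cy^2))
          = Real.sqrt (lam1^2 * ((lam1*(1-cy))^2 + lam2^2*(1-cy^2))) := by
        rw [Real.sqrt_mul (sq_nonneg lam1), Real.sqrt_sq hlam1pos.le]
      rw [h1, ← Real.sqrt_mul hB2nn]
      exact Real.sqrt_le_sqrt hK
    calc lam1 * Tx ≤ lam1 * (Real.sqrt A2 * Real.sqrt ((lam1*(1-cy))^2 + lam2^2*(1-cy^2))) :=
          mul_le_mul_of_nonneg_left hTx2 hlam1pos.le
      _ = Real.sqrt A2 * (lam1 * Real.sqrt ((lam1*(1-cy))^2 + lam2^2*(1-cy^2))) := by ring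
      _ ≤ Real.sqrt A2 * (Real.sqrt B2 * Real.sqrt (lam2^2 + B2)) :=
          mul_le_mul_of_nonneg_left hsqK (Real.sqrt_nonneg _)
  -- y-side cross-term bound
  have hTyb : lam1 * Ty ≤ Real.sqrt B2 * (Real.sqrt A2 * Real.sqrt (lam2^2 + A2)) := by
    set Ex := ∑ i ∈ Finset.univ.erase (0 : Fin (p+2)), (βv i)^2 with hExdef
    set Eu := ∑ i ∈ Finset.univ.erase (0 : Fin (p+2)), (wv i)^2 with hEudef
    have hExnn : 0 ≤ Ex := Finset.sum_nonneg fun i _ => sq_nonneg _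
    have hEunn : 0 ≤ Eu := Finset.sum_nonneg fun i _ => sq_nonneg _
    have hTx1 : Ty = l 0 * (βv 0 * wv 0)
        + ∑ i ∈ Finset.univ.erase 0, l i * (βv i * wv i) := by
      rw [hTydef]; exact hsplit βv wv
    have hExb : (βv 0)^2 + Ex ≤ B2 := by rw [← hdotsq βv]; exact hββ
    have hEub : (wv 0)^2 + Eu ≤ 2 - 2*cx := by rw [← hdotsq wv]; exact hww
    have hEub2 : Eu ≤ 1 - cx^2 := by rw [hw0] at hEub; linarith only [hEub]
    have head : l 0 * (βv 0 * wv 0) ≤ |βv 0| * (lam1*(1 - cx)) := by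
      have h1 : -(βv 0) ≤ |βv 0| := neg_le_abs _
      have h2 : 0 ≤ lam1 * (1 - cx) := mul_nonneg hlam1pos.le (by linarith only [hcx1])
      calc l 0 * (βv 0 * wv 0) = (lam1*(1-cx)) * (-(βv 0)) := by
            rw [hw0, ← hlam1]; ring
        _ ≤ (lam1*(1-cx)) * |βv 0| := mul_le_mul_of_nonneg_left h1 h2
        _ = |βv 0| * (lam1*(1-cx)) := by ring
    have tail : ∑ i ∈ Finset.univ.erase 0, l i * (βv i * wv i)
        ≤ Real.sqrt Ex * (lam2 * Real.sqrt Eu) := by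
      have := htail βv wv
      rw [← hExdef, ← hEudef] at this
      calc ∑ i ∈ Finset.univ.erase 0, l i * (βv i * wv i)
          ≤ lam2 * (Real.sqrt Ex * Real.sqrt Eu) := this
        _ = Real.sqrt Ex * (lam2 * Real.sqrt Eu) := by ring
    have cs := two_cs (|βv 0|) (Real.sqrt Ex) (lam1*(1-cx)) (lam2 * Real.sqrt Eu)
    rw [sq_abs, Real.sq_sqrt hExnn] at cs
    have hy2 : (lam2 * Real.sqrt Eu)^2 = lam2^2 * Eu := by
      rw [mul_pow, Real.sq_sqrt hEunn]
    rw [hy2] at cs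
    have hs1 : Real.sqrt ((βv 0)^2 + Ex) ≤ Real.sqrt B2 := Real.sqrt_le_sqrt hExb
    have hs2 : Real.sqrt ((lam1*(1-cx))^2 + lam2^2*Eu)
        ≤ Real.sqrt ((lam1*(1-cx))^2 + lam2^2*(1-cx^2)) :=
      Real.sqrt_le_sqrt (by linarith only [mul_le_mul_of_nonneg_left hEub2 (sq_nonneg lam2)])
    have hTx2 : Ty ≤ Real.sqrt B2 * Real.sqrt ((lam1*(1-cx))^2 + lam2^2*(1-cx^2)) := by
      calc Ty = l 0 * (βv 0 * wv 0) + ∑ i ∈ Finset.univ.erase 0, l i * (βv i * wv i) := hTx1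
        _ ≤ |βv 0| * (lam1*(1-cx)) + Real.sqrt Ex * (lam2 * Real.sqrt Eu) :=
            add_le_add head tail
        _ ≤ Real.sqrt ((βv 0)^2 + Ex) * Real.sqrt ((lam1*(1-cx))^2 + lam2^2*Eu) := cs
        _ ≤ Real.sqrt B2 * Real.sqrt ((lam1*(1-cx))^2 + lam2^2*(1-cx^2)) :=
            mul_le_mul hs1 hs2 (Real.sqrt_nonneg _) (Real.sqrt_nonneg _)
    have hK : lam1^2 * ((lam1*(1-cx))^2 + lam2^2*(1-cx^2)) ≤ A2 * (lam2^2 + A2) := by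
      have e2 : lam1^2*(1-cx) ≤ A2 := le_trans h1cx hA2L
      have e1 : 0 ≤ lam1^2*(1-cx) := mul_nonneg (sq_nonneg _) (by linarith only [hcx1])
      have e3 := mul_le_mul_of_nonneg_left hA2L (sq_nonneg lam2)
      linarith only [mul_self_le_mul_self e1 e2, e3]
    have hsqK : lam1 * Real.sqrt ((lam1*(1-cx))^2 + lam2^2*(1-cx^2))
        ≤ Real.sqrt A2 * Real.sqrt (lam2^2 + A2) := by
      have h1 : lam1 * Real.sqrt ((lam1*(1-cx))^2 + lam2^2*(1-cx^2))
          = Real.sqrt (lam1^2 * ((lam1*(1-cx))^2 + lam2^2*(1-cx^2))) := by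
        rw [Real.sqrt_mul (sq_nonneg lam1), Real.sqrt_sq hlam1pos.le]
      rw [h1, ← Real.sqrt_mul hA2nn]
      exact Real.sqrt_le_sqrt hK
    calc lam1 * Ty ≤ lam1 * (Real.sqrt B2 * Real.sqrt ((lam1*(1-cx))^2 + lam2^2*(1-cx^2))) :=
          mul_le_mul_of_nonneg_left hTx2 hlam1pos.le
      _ = Real.sqrt B2 * (lam1 * Real.sqrt ((lam1*(1-cx))^2 + lam2^2*(1-cx^2))) := by ring
      _ ≤ Real.sqrt B2 * (Real.sqrt A2 * Real.sqrt (lam2^2 + A2)) :=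
          mul_le_mul_of_nonneg_left hsqK (Real.sqrt_nonneg _)
  -- combine the two cross terms
  set C : ℝ := Real.sqrt ((L1/2) * Eb + (L1/2) * Ea + lam2^2) with hC
  have hCnn : 0 ≤ C := Real.sqrt_nonneg _
  have hcomb : lam1 * (Tx + Ty) ≤ (A2 + B2) * C := by
    have s1 : Real.sqrt (lam2^2 + B2) + Real.sqrt (lam2^2 + A2)
        ≤ 2 * Real.sqrt (lam2^2 + (B2 + A2)/2) := sqrt_concave B2 A2 (lam2^2) hB2nn hA2nn
          (sq_nonneg _)
    have s2 : Real.sqrt (lam2^2 + (B2 + A2)/2) ≤ C := by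
      rw [hC]
      exact Real.sqrt_le_sqrt (by linarith only [hA2E, hB2E, hlam2nn, sq_nonneg lam2])
    have s3 : Real.sqrt A2 * Real.sqrt B2 ≤ (A2 + B2)/2 := by
      nlinarith only [sq_nonneg (Real.sqrt A2 - Real.sqrt B2), Real.sq_sqrt hA2nn,
        Real.sq_sqrt hB2nn]
    have s4 : (0:ℝ) ≤ Real.sqrt A2 * Real.sqrt B2 :=
      mul_nonneg (Real.sqrt_nonneg _) (Real.sqrt_nonneg _)
    have s5 : lam1 * (Tx + Ty) ≤ (Real.sqrt A2 * Real.sqrt B2)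
        * (Real.sqrt (lam2^2 + B2) + Real.sqrt (lam2^2 + A2)) := by
      have h := add_le_add hTxb hTyb
      calc lam1 * (Tx + Ty) = lam1 * Tx + lam1 * Ty := by ring
        _ ≤ Real.sqrt A2 * (Real.sqrt B2 * Real.sqrt (lam2^2 + B2))
            + Real.sqrt B2 * (Real.sqrt A2 * Real.sqrt (lam2^2 + A2)) := h
        _ = (Real.sqrt A2 * Real.sqrt B2)
            * (Real.sqrt (lam2^2 + B2) + Real.sqrt (lam2^2 + A2)) := by ring
    have s6 : (Real.sqrt A2 * Real.sqrt B2)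
        * (Real.sqrt (lam2^2 + B2) + Real.sqrt (lam2^2 + A2))
        ≤ ((A2 + B2)/2) * (2 * C) := by
      have hsumnn : (0:ℝ) ≤ Real.sqrt (lam2^2 + B2) + Real.sqrt (lam2^2 + A2) :=
        add_nonneg (Real.sqrt_nonneg _) (Real.sqrt_nonneg _)
      have h2C : Real.sqrt (lam2^2 + B2) + Real.sqrt (lam2^2 + A2) ≤ 2 * C := by
        calc Real.sqrt (lam2^2 + B2) + Real.sqrt (lam2^2 + A2)
            ≤ 2 * Real.sqrt (lam2^2 + (B2 + A2)/2) := s1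
          _ ≤ 2 * C := by linarith only [s2]
      exact mul_le_mul s3 h2C hsumnn (by linarith only [hA2nn, hB2nn])
    calc lam1 * (Tx + Ty) ≤ (Real.sqrt A2 * Real.sqrt B2)
          * (Real.sqrt (lam2^2 + B2) + Real.sqrt (lam2^2 + A2)) := s5
      _ ≤ ((A2 + B2)/2) * (2 * C) := s6
      _ = (A2 + B2) * C := by ring
  have hX' : Tx + Ty ≤ 1/lam1 * (C * (A2 + B2)) := by
    calc Tx + Ty = (lam1 * (Tx + Ty))/lam1 := by field_simp
      _ ≤ ((A2 + B2) * C)/lam1 := (div_le_div_iff_of_pos_right hlam1pos).2 hcomb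
      _ = 1/lam1 * (C * (A2 + B2)) := by ring
  -- final assembly
  have hnx : φn' - φ1' = a - η • gx := by rw [hupx, ha]; abel
  have hny : ψn' - ψ1' = b - η • gy := by rw [hupy, hb]; abel
  have hgoalx : (φn' - φ1') ⬝ᵥ (φn' - φ1') = Ea - 2*η*(a ⬝ᵥ gx) + η^2*(gx ⬝ᵥ gx) := by
    rw [hnx, dot_sub_smul, ← hEa]
  have hgoaly : (ψn' - ψ1') ⬝ᵥ (ψn' - ψ1') = Eb - 2*η*(b ⬝ᵥ gy) + η^2*(gy ⬝ᵥ gy) := by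
    rw [hny, dot_sub_smul, ← hEb]
  rw [hgoalx, hgoaly, hag, hbh]
  have hGH : gx ⬝ᵥ gx + gy ⬝ᵥ gy ≤ 6*L1*(A2 + B2) := by linarith only [hgx2, hgy2]
  have t1 : 2*η*(Tx + Ty) ≤ 2*η*(1/lam1 * (C * (A2 + B2))) :=
    mul_le_mul_of_nonneg_left hX' (by linarith only [hη])
  have t2 : η^2*(gx ⬝ᵥ gx + gy ⬝ᵥ gy) ≤ η^2*(6*L1*(A2 + B2)) :=
    mul_le_mul_of_nonneg_left hGH (sq_nonneg η)
  linarith only [t1, t2]
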